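/- Fix n ≥ 3. There exist constants C > 0 and Q_0 such that for all real q ≥ Q_0 and all real a with |a| ≤ 2√q, the quantity a_n defined by the recursion a_m = 1 + a + (-q^m - 2q^{m-1} + a_{m-1}q^{m-1} + q)/(q^{m-1} + 1 - a_{m-1}) for 3 ≤ m ≤ n, with a_2 = a - q + 1, satisfies |a_n - ((5 - n) + (n-1)a - (n-1)q)| ≤ C/√q. -/

import Mathlib

theorem aux_pow (n : ℕ) : ((n:ℝ)+10)^2 ≤ (10:ℝ)^(n+10) := by
  induction n with
  | zero => norm_num
  | succ n ih =>
    have h : (0:ℝ) ≤ (n:ℝ) := n.cast_nonneg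
    have hp : (0:ℝ) < (10:ℝ)^(n+10) := pow_pos (by norm_num) _
    have : (10:ℝ)^(n+1+10) = (10:ℝ)^(n+10) * 10 := by rw [show n+1+10 = (n+10)+1 by ring, pow_succ]
    push_cast
    nlinarith

theorem base_est (q a s A3 : ℝ) (hs2 : s^2 = q) (hs1000 : (1000:ℝ) ≤ s)
    (ha2 : -(2*s) ≤ a ∧ a ≤ 2*s)
    (hA3 : A3 = 1 + a + (-q ^ 3 - 2 * q ^ 2 + (a - q + 1) * q ^ 2 + q) / (q ^ 2 + q - a)) :
    |A3 - (2 + 2*a - 2*q)| ≤ 1000 / s := by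
  have hs0 : (0:ℝ) < s := by linarith
  have hq4 : q^2 = s^4 := by rw [← hs2]; ring
  have hq0 : (0:ℝ) < q := hs2 ▸ pow_pos hs0 2
  have hDpos : 0 < q^2 + q - a := by nlinarith [ha2.1, ha2.2]
  have hE3 : A3 - (2 + 2*a - 2*q) = a*(a+1-3*q)/(q^2+q-a) := by
    rw [hA3, eq_div_iff hDpos.ne', sub_mul, add_mul, div_mul_cancel₀ _ hDpos.ne']; ring
  rw [hE3, abs_div, abs_of_pos hDpos, div_le_div_iff₀ hDpos hs0]
  have h1 : |a*(a+1-3*q)| ≤ 2*s*(2*s+1+3*q) := by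
    rw [abs_mul]
    apply mul_le_mul (abs_le.mpr ha2) ?_ (abs_nonneg _) (by positivity)
    rw [abs_le]; constructor <;> nlinarith [ha2.1, ha2.2]
  nlinarith [mul_le_mul_of_nonneg_right h1 hs0.le, ha2.1, ha2.2, abs_nonneg (a*(a+1-3*q))]

theorem step_id (q a c u Am Am1 : ℝ) (hDne : u + 1 - Am ≠ 0)
    (hA : Am1 = 1 + a + (-(u*q) - 2*u + Am*u + q)/(u + 1 - Am)) :
    (Am1 - ((4-c)+c*a-c*q)) * (u + 1 - Am) =
      q + ((c-1)*(q-a)+c-4)*((c-1)*(q-a)+q+c-3)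
        + (Am - ((5-c)+(c-1)*a-(c-1)*q))*(u - (c-1)*(q-a) - q + 3 - c) := by
  rw [hA]; field_simp; ring

set_option maxHeartbeats 1000000 in
theorem step_est (q a s nn c u K Am Am1 : ℝ)
    (hs2 : s^2 = q) (hs1000 : (1000:ℝ) ≤ s)
    (hc3 : (3:ℝ) ≤ c) (hcn : c + 1 ≤ nn) (hnn : nn^2 ≤ s)
    (ha2 : -(2*s) ≤ a ∧ a ≤ 2*s)
    (hus : s^6 ≤ u)
    (hK : (1000:ℝ) ≤ K) (hKs : K ≤ s)
    (hE : |Am - ((5-c)+(c-1)*a-(c-1)*q)| ≤ K / s)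
    (hA : Am1 = 1 + a + (-(u*q) - 2*u + Am*u + q)/(u + 1 - Am)) :
    |Am1 - ((4-c)+c*a-c*q)| ≤ 10*K/s := by
  have hs0 : (0:ℝ) < s := by linarith
  have hss : s*s = q := by rw [← hs2]; ring
  have hq0 : (0:ℝ) < q := hs2 ▸ pow_pos hs0 2
  have hq1e6 : (1000000:ℝ) ≤ q := by
    have h := mul_le_mul hs1000 hs1000 (by norm_num) (by linarith)
    linarith [hss]
  have hnn4 : (4:ℝ) ≤ nn := by linarith
  have hnls : nn ≤ s := by
    have h := mul_nonneg (show (0:ℝ) ≤ nn by linarith) (show (0:ℝ) ≤ nn - 1 by linarith)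
    nlinarith [hnn]
  have hs60 : (0:ℝ) < s^6 := pow_pos hs0 6
  have hu0 : (0:ℝ) < u := by linarith
  have hs3big : (1000000000:ℝ) ≤ s^3 := by
    have := pow_le_pow_left₀ (by norm_num : (0:ℝ) ≤ 1000) hs1000 3
    norm_num at this; linarith
  have hs63 : s^3 * s^3 = s^6 := by ring
  have hs364 : 1000000000*s^3 ≤ s^6 := by
    have := mul_le_mul_of_nonneg_right hs3big (show (0:ℝ) ≤ s^3 by positivity)
    linarith [hs63]
  have hcs : c ≤ s := by linarith
  have hEs : |Am - ((5-c)+(c-1)*a-(c-1)*q)| * s ≤ K := (le_div_iff₀ hs0).mp hE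
  have hE1 : |Am - ((5-c)+(c-1)*a-(c-1)*q)| ≤ 1 := by
    refine le_trans hE ?_
    rw [div_le_one hs0]; exact hKs
  have h2sq : 2*s ≤ q := by
    have := mul_le_mul_of_nonneg_left (show (2:ℝ) ≤ s by linarith) hs0.le
    linarith [hss]
  have hca : (c-1)*a ≤ (c-1)*(2*s) := mul_le_mul_of_nonneg_left ha2.2 (by linarith)
  have hcq : (c-1)*(2*s) ≤ (c-1)*q := mul_le_mul_of_nonneg_left h2sq (by linarith)
  have hA_ub : Am ≤ 6 := by
    have h := (abs_le.mp hE1).2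
    linarith
  have hDge : u/2 ≤ u + 1 - Am := by linarith
  have hD0 : (0:ℝ) < u + 1 - Am := by linarith
  have hDne : u + 1 - Am ≠ 0 := ne_of_gt hD0
  have hid := step_id q a c u Am Am1 hDne hA
  clear hA
  have h2' : |q-a| ≤ 2*q := by rw [abs_le]; constructor <;> linarith [ha2.1, ha2.2]
  have hb : |(c-1)*(q-a)| ≤ 2*nn*q := by
    rw [abs_mul]
    have h1' : |c-1| ≤ nn := by
      rw [abs_of_nonneg (show (0:ℝ) ≤ c - 1 by linarith)]; linarith
    calc |c-1| * |q-a| ≤ nn*(2*q) := mul_le_mul h1' h2' (abs_nonneg _) (by linarith)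
    _ = 2*nn*q := by ring
  have hb' := abs_le.mp hb
  have hnq : nn + 4 ≤ nn*q := by
    have h := mul_le_mul_of_nonneg_left hq1e6 (show (0:ℝ) ≤ nn by linarith)
    linarith
  have h4q : 4*q ≤ nn*q := by
    have := mul_le_mul_of_nonneg_right hnn4 hq0.le
    linarith
  have hf1 : |(c-1)*(q-a)+c-4| ≤ 3*nn*q := by
    rw [abs_le]; constructor <;> linarith [hb'.1, hb'.2, hnq, hcn, hnls]
  have hf2 : |(c-1)*(q-a)+q+c-3| ≤ 4*nn*q := by
    rw [abs_le]; constructor <;> linarith [hb'.1, hb'.2, hnq, hcn, hnls, h4q]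
  have hprod : |((c-1)*(q-a)+c-4)*((c-1)*(q-a)+q+c-3)| ≤ 12*nn^2*q^2 := by
    rw [abs_mul]
    calc |(c-1)*(q-a)+c-4| * |(c-1)*(q-a)+q+c-3| ≤ (3*nn*q)*(4*nn*q) :=
      mul_le_mul hf1 hf2 (abs_nonneg _) (by positivity)
    _ = 12*nn^2*q^2 := by ring
  have hnnq : nn*q ≤ s*q := mul_le_mul_of_nonneg_right hnls hq0.le
  have hsq3 : s*q = s^3 := by rw [← hs2]; ring
  have hqs3 : q ≤ s^3 := by
    have := mul_nonneg hq0.le (show (0:ℝ) ≤ s - 1 by linarith)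
    nlinarith [hsq3]
  have hnq2 : 2*(nn*q) + q + c + 3 ≤ u := by linarith
  have hP : |u - (c-1)*(q-a) - q + 3 - c| ≤ 2*u := by
    rw [abs_le]; constructor <;> linarith [hb'.1, hb'.2]
  have hEP : |(Am - ((5-c)+(c-1)*a-(c-1)*q)) * (u - (c-1)*(q-a) - q + 3 - c)| * s ≤ 2*K*u := by
    rw [abs_mul]
    calc |Am - ((5-c)+(c-1)*a-(c-1)*q)| * |u - (c-1)*(q-a) - q + 3 - c| * s
        = (|Am - ((5-c)+(c-1)*a-(c-1)*q)| * s) * |u - (c-1)*(q-a) - q + 3 - c| := by ring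
    _ ≤ K * (2*u) := mul_le_mul hEs hP (abs_nonneg _) (by linarith)
    _ = 2*K*u := by ring
  have habs3 : |q + ((c-1)*(q-a)+c-4)*((c-1)*(q-a)+q+c-3)
        + (Am - ((5-c)+(c-1)*a-(c-1)*q)) * (u - (c-1)*(q-a) - q + 3 - c)|
      ≤ q + 12*nn^2*q^2 + |(Am - ((5-c)+(c-1)*a-(c-1)*q)) * (u - (c-1)*(q-a) - q + 3 - c)| := by
    calc _ ≤ |q| + |((c-1)*(q-a)+c-4)*((c-1)*(q-a)+q+c-3)|
        + |(Am - ((5-c)+(c-1)*a-(c-1)*q)) * (u - (c-1)*(q-a) - q + 3 - c)| := abs_add_three _ _ _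
    _ ≤ _ := by rw [abs_of_pos hq0]; linarith [hprod]
  have hX0 : (0:ℝ) ≤ |Am1 - ((4-c)+c*a-c*q)| := abs_nonneg _
  have hqs : q * s = s^3 := by rw [← hs2]; ring
  have hnum : |Am1 - ((4-c)+c*a-c*q)| * (u + 1 - Am) * s ≤ s^3 + 12*nn^2*q^2*s + 2*K*u := by
    have h0 : |Am1 - ((4-c)+c*a-c*q)| * (u + 1 - Am) = |(Am1 - ((4-c)+c*a-c*q)) * (u + 1 - Am)| := by
      rw [abs_mul, abs_of_pos hD0]
    rw [h0, hid]
    have hmulr := mul_le_mul_of_nonneg_right habs3 hs0.le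
    linarith [hEP, hmulr]
  have hq4 : q^2 = s^4 := by rw [← hs2]; ring
  have hfin : |Am1 - ((4-c)+c*a-c*q)| * s * u ≤ 10 * K * u := by
    have h2 : (|Am1 - ((4-c)+c*a-c*q)| * s) * (u/2) ≤ (|Am1 - ((4-c)+c*a-c*q)| * s) * (u + 1 - Am) :=
      mul_le_mul_of_nonneg_left hDge (by positivity)
    have h3 : |Am1 - ((4-c)+c*a-c*q)| * s * u ≤ 2*s^3 + 24*nn^2*q^2*s + 4*K*u := by
      linarith [hnum, h2]
    have h4 : nn^2*q^2*s ≤ s^6 := by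
      have h4a := mul_le_mul_of_nonneg_right hnn (show (0:ℝ) ≤ s^5 from by positivity)
      calc nn^2*q^2*s = nn^2*s^5 := by rw [hq4]; ring
      _ ≤ s*s^5 := h4a
      _ = s^6 := by ring
    have h5 : 1000*u ≤ K*u := mul_le_mul_of_nonneg_right hK hu0.le
    have h6 : s^3 ≤ s^6 := pow_le_pow_right₀ (by linarith) (by norm_num)
    linarith
  have hXs : |Am1 - ((4-c)+c*a-c*q)| * s ≤ 10 * K := le_of_mul_le_mul_right (by linarith [hfin]) hu0
  rw [le_div_iff₀ hs0]
  exact hXs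

theorem a_n_asymptotic (n : ℕ) (hn : 3 ≤ n) :
    ∃ C > (0 : ℝ), ∃ Q₀ : ℝ, ∀ q a : ℝ, Q₀ ≤ q → |a| ≤ 2 * Real.sqrt q →
      ∀ A : ℕ → ℝ,
        A 2 = a - q + 1 →
        (∀ m : ℕ, 3 ≤ m → m ≤ n →
          A m = 1 + a +
            (-q ^ m - 2 * q ^ (m - 1) + A (m - 1) * q ^ (m - 1) + q) /
              (q ^ (m - 1) + 1 - A (m - 1))) →
        |A n - ((5 - (n : ℝ)) + ((n : ℝ) - 1) * a - ((n : ℝ) - 1) * q)| ≤ C / Real.sqrt q := by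
  refine ⟨(10:ℝ)^n, by positivity, (10:ℝ)^(2*(n+10)), ?_⟩
  intro q a hq ha A hA2 hrec
  set s := Real.sqrt q with hs_def
  have hq0 : (0:ℝ) < q := lt_of_lt_of_le (by positivity) hq
  have hs2 : s^2 = q := Real.sq_sqrt hq0.le
  have hsS : (10:ℝ)^(n+10) ≤ s := by
    have h1 : (10:ℝ)^(2*(n+10)) = ((10:ℝ)^(n+10))^2 := by rw [← pow_mul]; ring_nf
    have h2 : Real.sqrt ((10:ℝ)^(2*(n+10))) ≤ s := Real.sqrt_le_sqrt hq
    rwa [h1, Real.sqrt_sq (by positivity)] at h2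
  have haux : ((n:ℝ)+10)^2 ≤ (10:ℝ)^(n+10) := aux_pow n
  have hn3 : (3:ℝ) ≤ (n:ℝ) := by exact_mod_cast hn
  have hns2 : ((n:ℝ)+10)^2 ≤ s := le_trans haux hsS
  have hns : ((n:ℝ))^2 ≤ s := by nlinarith
  have h10n : (10:ℝ)^n ≤ s := by
    refine le_trans ?_ hsS
    exact pow_le_pow_right₀ (by norm_num) (by omega)
  have hs1000 : (1000:ℝ) ≤ s := by
    refine le_trans ?_ h10n
    calc (1000:ℝ) = 10^3 := by norm_num
    _ ≤ 10^n := pow_le_pow_right₀ (by norm_num) hn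
  have hs0 : (0:ℝ) < s := by linarith
  have ha2 : -(2*s) ≤ a ∧ a ≤ 2*s := abs_le.mp ha
  have hss : s*s = q := by rw [← hs2]; ring
  have hq1 : (1:ℝ) ≤ q := by nlinarith
  have key : ∀ m, 3 ≤ m → m ≤ n →
      |A m - ((5 - (m:ℝ)) + ((m:ℝ) - 1) * a - ((m:ℝ) - 1) * q)| ≤ (10:ℝ)^m / s := by
    intro m hm
    induction m, hm using Nat.le_induction with
    | base =>
      intro h3n
      have hA3 := hrec 3 le_rfl h3n
      norm_num [hA2] at hA3
      rw [show q^2-(a-q) = q^2+q-a from by ring] at hA3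
      have hb := base_est q a s (A 3) hs2 hs1000 ha2 hA3
      have hcast : (5 - ((3:ℕ):ℝ)) + (((3:ℕ):ℝ) - 1) * a - (((3:ℕ):ℝ) - 1) * q = 2 + 2*a - 2*q := by
        push_cast; ring
      rw [hcast]
      calc |A 3 - (2 + 2*a - 2*q)| ≤ 1000 / s := hb
      _ ≤ (10:ℝ)^(3:ℕ)/s := by norm_num
    | succ m hm ih =>
      intro h1
      have hmn : m ≤ n := by omega
      have hE := ih hmn
      have hA := hrec (m+1) (by omega) h1
      simp only [Nat.add_sub_cancel] at hA
      rw [pow_succ] at hA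
      have hc3 : (3:ℝ) ≤ (m:ℝ) := by exact_mod_cast hm
      have hcn : (m:ℝ) + 1 ≤ (n:ℝ) := by exact_mod_cast h1
      have hus : s^6 ≤ q^m := by
        have hu3 : q^3 ≤ q^m := pow_le_pow_right₀ hq1 hm
        have hq3 : s^6 = q^3 := by rw [← hs2]; ring
        linarith
      have hK : (1000:ℝ) ≤ (10:ℝ)^m := by
        calc (1000:ℝ) = 10^3 := by norm_num
        _ ≤ 10^m := pow_le_pow_right₀ (by norm_num) hm
      have hKs : (10:ℝ)^m ≤ s := le_trans (pow_le_pow_right₀ (by norm_num) hmn) h10n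
      have hstep := step_est q a s (n:ℝ) (m:ℝ) (q^m) ((10:ℝ)^m) (A m) (A (m+1))
        hs2 hs1000 hc3 hcn hns ha2 hus hK hKs hE hA
      have hcast : ((m+1:ℕ):ℝ) = (m:ℝ) + 1 := by push_cast; ring
      rw [hcast, show (5 - ((m:ℝ)+1)) + (((m:ℝ)+1) - 1) * a - (((m:ℝ)+1) - 1) * q
          = (4-(m:ℝ)) + (m:ℝ)*a - (m:ℝ)*q from by ring, pow_succ]
      calc |A (m+1) - ((4-(m:ℝ)) + (m:ℝ)*a - (m:ℝ)*q)| ≤ 10*(10:ℝ)^m/s := hstep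
      _ = (10:ℝ)^m*10/s := by ring
  exact key n hn le_rfl
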